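/- arXiv:2311.06104 — 3 statements merged into one kernel-verified Lean document; each statement's English description precedes it below -/
import Mathlib

section
/- Let N, K ∈ ℕ, let A ∈ ℝ^{2N×2K} satisfy Aᵀ J_{2N} A = J_{2K} with symplectic inverse A⁺ = J_{2K}ᵀ Aᵀ J_{2N}, and let H : ℝ^{2N} → ℝ be differentiable. Then for every ȳ ∈ ℝ^{2K}, the symplectically projected vector field satisfies A⁺ J_{2N} ∇H(A ȳ) = J_{2K} ∇(H ∘ A)(ȳ), where H ∘ A : ℝ^{2K} → ℝ is the reduced Hamiltonian ȳ ↦ H(Aȳ). -/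
open Matrix

noncomputable section

/-- The canonical symplectic matrix `J_{2n} = [[0, I], [-I, 0]]`. -/
def symplJ (n : ℕ) : Matrix (Fin n ⊕ Fin n) (Fin n ⊕ Fin n) ℝ :=
  Matrix.fromBlocks 0 1 (-1) 0

/-- The symplectic inverse `A⁺ = J_{2K}ᵀ Aᵀ J_{2N}` of a rectangular matrix
`A ∈ ℝ^{2N×2K}`. -/
def symplInv {N K : ℕ} (A : Matrix (Fin N ⊕ Fin N) (Fin K ⊕ Fin K) ℝ) :
    Matrix (Fin K ⊕ Fin K) (Fin N ⊕ Fin N) ℝ :=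
  (symplJ K)ᵀ * Aᵀ * symplJ N

lemma toEuclideanLin_mul_apply {m n p : Type*} [Fintype m] [Fintype n] [Fintype p]
    [DecidableEq n] [DecidableEq p]
    (M : Matrix m n ℝ) (P : Matrix n p ℝ) (x : EuclideanSpace ℝ p) :
    Matrix.toEuclideanLin (M * P) x = Matrix.toEuclideanLin M (Matrix.toEuclideanLin P x) := by
  simp [Matrix.toEuclideanLin_apply, Matrix.mulVec_mulVec]

lemma gradient_comp_linear {m n : Type*} [Fintype m] [Fintype n] [DecidableEq m] [DecidableEq n]
    (A : Matrix m n ℝ) (H : EuclideanSpace ℝ m → ℝ) (hH : Differentiable ℝ H)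
    (y : EuclideanSpace ℝ n) :
    gradient (fun z => H (Matrix.toEuclideanLin A z)) y
      = Matrix.toEuclideanLin Aᵀ (gradient H (Matrix.toEuclideanLin A y)) := by
  set g := gradient H (Matrix.toEuclideanLin A y) with hg
  set LC := LinearMap.toContinuousLinearMap (Matrix.toEuclideanLin A) with hLC
  have hHg : HasGradientAt H g (Matrix.toEuclideanLin A y) :=
    (hH (Matrix.toEuclideanLin A y)).hasGradientAt
  have hF : HasFDerivAt H (InnerProductSpace.toDual ℝ _ g) (Matrix.toEuclideanLin A y) :=
    hHg.hasFDerivAt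
  have hcomp : HasFDerivAt (fun z => H (Matrix.toEuclideanLin A z))
      ((InnerProductSpace.toDual ℝ _ g).comp LC) y :=
    hF.comp y LC.hasFDerivAt
  have hdual : (InnerProductSpace.toDual ℝ _ g).comp LC
      = InnerProductSpace.toDual ℝ _ (Matrix.toEuclideanLin Aᵀ g) := by
    ext v
    have h1 : Matrix.toEuclideanLin Aᵀ = LinearMap.adjoint (Matrix.toEuclideanLin A) := by
      rw [← Matrix.toEuclideanLin_conjTranspose_eq_adjoint,
        Matrix.conjTranspose_eq_transpose_of_trivial]
    simp only [ContinuousLinearMap.comp_apply, InnerProductSpace.toDual_apply_apply, h1]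
    exact (LinearMap.adjoint_inner_left (Matrix.toEuclideanLin A) v g).symm
  rw [hdual] at hcomp
  simpa using hcomp.hasGradientAt.gradient

/-- For a symplectic matrix `A` and a differentiable Hamiltonian `H`, the symplectically
projected vector field satisfies `A⁺ J_{2N} ∇H(Aȳ) = J_{2K} ∇(H∘A)(ȳ)`, where
`H∘A` is the reduced Hamiltonian. -/
theorem symplectic_galerkin_reduced_vector_field
    (N K : ℕ) (A : Matrix (Fin N ⊕ Fin N) (Fin K ⊕ Fin K) ℝ)
    (hA : Aᵀ * symplJ N * A = symplJ K)
    (H : EuclideanSpace ℝ (Fin N ⊕ Fin N) → ℝ)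
    (hH : Differentiable ℝ H) :
    ∀ ybar : EuclideanSpace ℝ (Fin K ⊕ Fin K),
      Matrix.toEuclideanLin (symplInv A)
        (Matrix.toEuclideanLin (symplJ N) (gradient H (Matrix.toEuclideanLin A ybar)))
      = Matrix.toEuclideanLin (symplJ K)
          (gradient (fun z => H (Matrix.toEuclideanLin A z)) ybar) := by
  intro ybar
  rw [gradient_comp_linear A H hH ybar]
  have hmat : symplInv A * symplJ N = symplJ K * Aᵀ := by
    have hJJ : symplJ N * symplJ N = -1 := by
      simp [symplJ, Matrix.fromBlocks_multiply, ← Matrix.fromBlocks_smul,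
        Matrix.fromBlocks_neg]
      ext (i|i) (j|j) <;> simp [Matrix.fromBlocks, Matrix.one_apply]
    have hJT : (symplJ K)ᵀ = -symplJ K := by
      simp [symplJ, Matrix.fromBlocks_transpose]
      ext (i|i) (j|j) <;> simp [Matrix.fromBlocks]
    rw [symplInv, hJT, Matrix.mul_assoc, hJJ]
    simp [Matrix.mul_assoc]
  calc Matrix.toEuclideanLin (symplInv A)
        (Matrix.toEuclideanLin (symplJ N) (gradient H (Matrix.toEuclideanLin A ybar)))
      = Matrix.toEuclideanLin (symplInv A * symplJ N) (gradient H (Matrix.toEuclideanLin A ybar)) := by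
        rw [toEuclideanLin_mul_apply]
    _ = Matrix.toEuclideanLin (symplJ K * Aᵀ) (gradient H (Matrix.toEuclideanLin A ybar)) := by rw [hmat]
    _ = _ := by rw [toEuclideanLin_mul_apply]
end
end

section
/- Let N, K ∈ ℕ, let A ∈ ℝ^{2N×2K} satisfy Aᵀ J_{2N} A = J_{2K} with symplectic inverse A⁺ = J_{2K}ᵀ Aᵀ J_{2N}, and let H : ℝ^{2N} → ℝ be differentiable. Let y : [0,T] → ℝ^{2N} be differentiable with y'(t) = J_{2N} ∇H(y(t)) for all t, and suppose the trajectory stays on the reduced subspace: y(t) = A A⁺ y(t) for all t ∈ [0,T]. Then the reduced trajectory ȳ(t) = A⁺ y(t) solves the reduced canonical Hamiltonian system ȳ'(t) = J_{2K} ∇(H ∘ A)(ȳ(t)) for all t ∈ [0,T]. -/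
open Matrix

noncomputable section

section Aux

open InnerProductSpace

variable {m n : Type*} [Fintype m] [Fintype n] [DecidableEq m] [DecidableEq n]

lemma toEuclideanLin_mul' {p : Type*} [Fintype p] [DecidableEq p]
    (M : Matrix m n ℝ) (N : Matrix n p ℝ) (v : EuclideanSpace ℝ p) :
    Matrix.toEuclideanLin (M * N) v = Matrix.toEuclideanLin M (Matrix.toEuclideanLin N v) := by
  simp [Matrix.toEuclideanLin_apply, Matrix.mulVec_mulVec]

lemma gradient_comp_matrix (M : Matrix m n ℝ) (H : EuclideanSpace ℝ m → ℝ)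
    (hH : Differentiable ℝ H) (z : EuclideanSpace ℝ n) :
    gradient (fun w => H (Matrix.toEuclideanLin M w)) z
      = Matrix.toEuclideanLin Mᵀ (gradient H (Matrix.toEuclideanLin M z)) := by
  have hL : HasFDerivAt (fun w => (Matrix.toEuclideanLin M) w)
      (LinearMap.toContinuousLinearMap (Matrix.toEuclideanLin M)) z :=
    (LinearMap.toContinuousLinearMap (Matrix.toEuclideanLin M)).hasFDerivAt
  have hg := (hH.differentiableAt (x := Matrix.toEuclideanLin M z)).hasGradientAt
  rw [hasGradientAt_iff_hasFDerivAt] at hg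
  have hcomp := hg.comp z hL
  have : ((toDual ℝ _ (gradient H (Matrix.toEuclideanLin M z))).comp
      (LinearMap.toContinuousLinearMap (Matrix.toEuclideanLin M)))
      = toDual ℝ _ (Matrix.toEuclideanLin Mᵀ (gradient H (Matrix.toEuclideanLin M z))) := by
    ext v
    simp only [ContinuousLinearMap.comp_apply, toDual_apply_apply, LinearMap.coe_toContinuousLinearMap']
    have : (Mᵀ : Matrix n m ℝ) = Mᴴ := by ext i j; simp [Matrix.conjTranspose]
    rw [this, Matrix.toEuclideanLin_conjTranspose_eq_adjoint]
    exact (LinearMap.adjoint_inner_left _ _ _).symm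
  rw [this] at hcomp
  simpa [Function.comp_def] using hcomp.hasGradientAt.gradient

end Aux

lemma symplInv_mul_symplJ {N K : ℕ} (A : Matrix (Fin N ⊕ Fin N) (Fin K ⊕ Fin K) ℝ) :
    symplInv A * symplJ N = symplJ K * Aᵀ := by
  have hJJ : symplJ N * symplJ N = -1 := by
    simp [symplJ, Matrix.fromBlocks_multiply, ← Matrix.fromBlocks_diagonal,
      ← Matrix.fromBlocks_one]
    rw [Matrix.fromBlocks_neg]; simp
  have hJT : (symplJ K)ᵀ = -(symplJ K) := by
    simp [symplJ, Matrix.fromBlocks_transpose]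
    rw [Matrix.fromBlocks_neg]; simp
  unfold symplInv
  rw [Matrix.mul_assoc, hJJ, hJT]
  simp [Matrix.mul_assoc]

/-- If a Hamiltonian trajectory `y' = J_{2N} ∇H(y)` stays on the reduced subspace,
`y(t) = A A⁺ y(t)`, then the reduced trajectory `ȳ = A⁺ y` solves the reduced canonical
Hamiltonian system `ȳ' = J_{2K} ∇(H∘A)(ȳ)`. -/
theorem reduced_trajectory_hamiltonian
    (N K : ℕ) (T : ℝ)
    (A : Matrix (Fin N ⊕ Fin N) (Fin K ⊕ Fin K) ℝ)
    (hA : Aᵀ * symplJ N * A = symplJ K)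
    (H : EuclideanSpace ℝ (Fin N ⊕ Fin N) → ℝ)
    (hH : Differentiable ℝ H)
    (y : ℝ → EuclideanSpace ℝ (Fin N ⊕ Fin N))
    (hy : ∀ t ∈ Set.Icc (0 : ℝ) T,
      HasDerivAt y (Matrix.toEuclideanLin (symplJ N) (gradient H (y t))) t)
    (hrange : ∀ t ∈ Set.Icc (0 : ℝ) T,
      Matrix.toEuclideanLin A (Matrix.toEuclideanLin (symplInv A) (y t)) = y t) :
    ∀ t ∈ Set.Icc (0 : ℝ) T,
      HasDerivAt (fun s => Matrix.toEuclideanLin (symplInv A) (y s))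
        (Matrix.toEuclideanLin (symplJ K)
          (gradient (fun z => H (Matrix.toEuclideanLin A z))
            (Matrix.toEuclideanLin (symplInv A) (y t)))) t := by
  intro t ht
  set L := LinearMap.toContinuousLinearMap (Matrix.toEuclideanLin (symplInv A)) with hL
  have hd : HasDerivAt (fun s => Matrix.toEuclideanLin (symplInv A) (y s))
      (Matrix.toEuclideanLin (symplInv A)
        (Matrix.toEuclideanLin (symplJ N) (gradient H (y t)))) t :=
    L.hasFDerivAt.comp_hasDerivAt t (hy t ht)
  convert hd using 1
  rw [gradient_comp_matrix A H hH, hrange t ht, ← toEuclideanLin_mul', ← toEuclideanLin_mul',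
    ← symplInv_mul_symplJ]
end
end

section
/- Let N ∈ ℕ, Δt ∈ ℝ, and let H₁, H₂ : ℝ^N → ℝ be twice continuously differentiable. Define the explicit Störmer–Verlet one-step map Ψ : ℝ^N × ℝ^N → ℝ^N × ℝ^N by Ψ(q,p) = (q₁, p₁) where p_{1/2} = p − (Δt/2) ∇H₁(q), q₁ = q + Δt ∇H₂(p_{1/2}), p₁ = p_{1/2} − (Δt/2) ∇H₁(q₁). Then Ψ is differentiable and its derivative is symplectic at every point: for all (q,p) and all u, v ∈ ℝ^{2N}, ⟨DΨ(q,p)u, J_{2N} DΨ(q,p)v⟩ = ⟨u, J_{2N} v⟩. -/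
open scoped RealInnerProductSpace

noncomputable section

/-- One step of the explicit Störmer–Verlet scheme for the separable Hamiltonian
`H(q,p) = H₁(q) + H₂(p)` with time step `Δt`. -/
def verletStep (N : ℕ) (Δt : ℝ) (H₁ H₂ : EuclideanSpace ℝ (Fin N) → ℝ)
    (x : EuclideanSpace ℝ (Fin N) × EuclideanSpace ℝ (Fin N)) :
    EuclideanSpace ℝ (Fin N) × EuclideanSpace ℝ (Fin N) :=
  let phalf := x.2 - (Δt / 2) • gradient H₁ x.1
  let q1 := x.1 + Δt • gradient H₂ phalf
  let p1 := phalf - (Δt / 2) • gradient H₁ q1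
  (q1, p1)

/-- The canonical symplectic bilinear form `(u, v) ↦ ⟨u, J_{2N} v⟩` on
`ℝ^{2N} = ℝ^N × ℝ^N`, where `J_{2N} = [[0, I], [-I, 0]]`, so that
`⟨u, J v⟩ = ⟨u₁, v₂⟩ - ⟨u₂, v₁⟩`. -/
def canonicalForm (N : ℕ)
    (u v : EuclideanSpace ℝ (Fin N) × EuclideanSpace ℝ (Fin N)) : ℝ :=
  ⟪u.1, v.2⟫ - ⟪u.2, v.1⟫

section aux

variable {N : ℕ}

local notation "E" => EuclideanSpace ℝ (Fin N)

lemma grad_diff {f : E → ℝ} (hf : ContDiff ℝ 2 f) : Differentiable ℝ (gradient f) := by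
  have : gradient f = fun x => (InnerProductSpace.toDual ℝ E).symm (fderiv ℝ f x) := rfl
  rw [this]
  exact (InnerProductSpace.toDual ℝ E).symm.differentiable.comp
    ((hf.fderiv_right (m := 1) (by norm_num)).differentiable one_ne_zero)

lemma grad_fderiv_apply {f : E → ℝ} (hf : ContDiff ℝ 2 f) (x u v : E) :
    ⟪fderiv ℝ (gradient f) x u, v⟫ = fderiv ℝ (fderiv ℝ f) x u v := by
  have hg : HasFDerivAt (gradient f) (fderiv ℝ (gradient f) x) x :=
    (grad_diff hf x).hasFDerivAt
  have hd : HasFDerivAt (fderiv ℝ f) (fderiv ℝ (fderiv ℝ f) x) x :=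
    (((hf.fderiv_right (m := 1) (by norm_num)).differentiable one_ne_zero) x).hasFDerivAt
  have h1 : HasFDerivAt (fun y => ⟪gradient f y, v⟫)
      ((innerSL ℝ v).comp (fderiv ℝ (gradient f) x)) x := by
    have := (innerSL ℝ v).hasFDerivAt.comp x hg
    have he : (fun y => (innerSL ℝ v) (gradient f y)) = fun y => ⟪gradient f y, v⟫ := by
      funext y; simp only [innerSL_apply_apply]; exact real_inner_comm _ _
    rwa [Function.comp_def, he] at this
  have h2 : HasFDerivAt (fun y => ⟪gradient f y, v⟫)
      ((ContinuousLinearMap.apply ℝ ℝ v).comp (fderiv ℝ (fderiv ℝ f) x)) x := by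
    have he : (fun y => ⟪gradient f y, v⟫) = fun y => fderiv ℝ f y v := by
      funext y; exact InnerProductSpace.toDual_symm_apply
    rw [he]
    exact ((ContinuousLinearMap.apply ℝ ℝ v).hasFDerivAt.comp x hd :)
  have := h1.unique h2
  have happ := congrFun (congrArg DFunLike.coe this) u
  simp only [ContinuousLinearMap.coe_comp', Function.comp_apply,
    ContinuousLinearMap.apply_apply, innerSL_apply_apply] at happ
  rw [real_inner_comm]; exact happ

lemma grad_symm {f : E → ℝ} (hf : ContDiff ℝ 2 f) (x u v : E) :
    ⟪fderiv ℝ (gradient f) x u, v⟫ = ⟪u, fderiv ℝ (gradient f) x v⟫ := by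
  have hsym : IsSymmSndFDerivAt ℝ f x := hf.contDiffAt.isSymmSndFDerivAt (by norm_num)
  rw [grad_fderiv_apply hf, real_inner_comm, grad_fderiv_apply hf]
  exact hsym u v

/-- First shear map: kick in `p`. -/
def shearA (c : ℝ) (f : E → ℝ) (x : E × E) : E × E := (x.1, x.2 - c • gradient f x.1)

/-- Second shear map: drift in `q`. -/
def shearB (c : ℝ) (f : E → ℝ) (x : E × E) : E × E := (x.1 + c • gradient f x.2, x.2)

lemma shearA_hasFDerivAt (c : ℝ) {f : E → ℝ} (hf : ContDiff ℝ 2 f) (x : E × E) :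
    HasFDerivAt (shearA c f)
      ((ContinuousLinearMap.fst ℝ E E).prod
        (ContinuousLinearMap.snd ℝ E E -
          c • (fderiv ℝ (gradient f) x.1).comp (ContinuousLinearMap.fst ℝ E E))) x := by
  apply HasFDerivAt.prodMk
  · exact hasFDerivAt_fst
  · exact hasFDerivAt_snd.sub
      ((((grad_diff hf x.1).hasFDerivAt).comp x hasFDerivAt_fst).const_smul c)

lemma shearB_hasFDerivAt (c : ℝ) {f : E → ℝ} (hf : ContDiff ℝ 2 f) (x : E × E) :
    HasFDerivAt (shearB c f)
      (((ContinuousLinearMap.fst ℝ E E) +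
          c • (fderiv ℝ (gradient f) x.2).comp (ContinuousLinearMap.snd ℝ E E)).prod
        (ContinuousLinearMap.snd ℝ E E)) x := by
  apply HasFDerivAt.prodMk
  · exact hasFDerivAt_fst.add
      ((((grad_diff hf x.2).hasFDerivAt).comp x hasFDerivAt_snd).const_smul c)
  · exact hasFDerivAt_snd

lemma shearA_form (c : ℝ) {f : E → ℝ} (hf : ContDiff ℝ 2 f) (x : E × E) (u v : E × E) :
    canonicalForm N (fderiv ℝ (shearA c f) x u) (fderiv ℝ (shearA c f) x v)
      = canonicalForm N u v := by
  rw [(shearA_hasFDerivAt c hf x).fderiv]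
  simp only [canonicalForm, ContinuousLinearMap.prod_apply, ContinuousLinearMap.coe_fst',
    ContinuousLinearMap.coe_sub', Pi.sub_apply, ContinuousLinearMap.coe_snd',
    ContinuousLinearMap.smul_apply, ContinuousLinearMap.coe_comp', Function.comp_apply]
  rw [inner_sub_right, inner_sub_left, real_inner_smul_right, real_inner_smul_left,
    grad_symm hf]
  ring

lemma shearB_form (c : ℝ) {f : E → ℝ} (hf : ContDiff ℝ 2 f) (x : E × E) (u v : E × E) :
    canonicalForm N (fderiv ℝ (shearB c f) x u) (fderiv ℝ (shearB c f) x v)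
      = canonicalForm N u v := by
  rw [(shearB_hasFDerivAt c hf x).fderiv]
  simp only [canonicalForm, ContinuousLinearMap.prod_apply, ContinuousLinearMap.coe_fst',
    ContinuousLinearMap.coe_add', Pi.add_apply, ContinuousLinearMap.coe_snd',
    ContinuousLinearMap.smul_apply, ContinuousLinearMap.coe_comp', Function.comp_apply]
  rw [inner_add_right, inner_add_left, real_inner_smul_right, real_inner_smul_left,
    grad_symm hf]
  ring

end aux

/-- The explicit Störmer–Verlet one-step map is differentiable and its derivative is
symplectic at every point: it preserves the canonical symplectic bilinear form
`(u,v) ↦ ⟨u, J_{2N} v⟩`. -/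
theorem stormer_verlet_symplectic
    (N : ℕ) (Δt : ℝ)
    (H₁ H₂ : EuclideanSpace ℝ (Fin N) → ℝ)
    (hH₁ : ContDiff ℝ 2 H₁) (hH₂ : ContDiff ℝ 2 H₂) :
    Differentiable ℝ (verletStep N Δt H₁ H₂) ∧
      ∀ (x u v : EuclideanSpace ℝ (Fin N) × EuclideanSpace ℝ (Fin N)),
        canonicalForm N (fderiv ℝ (verletStep N Δt H₁ H₂) x u)
            (fderiv ℝ (verletStep N Δt H₁ H₂) x v)
          = canonicalForm N u v := by
  set c := Δt / 2 with hc
  have hdA : Differentiable ℝ (shearA c H₁) :=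
    fun x => (shearA_hasFDerivAt c hH₁ x).differentiableAt
  have hdB : Differentiable ℝ (shearB Δt H₂) :=
    fun x => (shearB_hasFDerivAt Δt hH₂ x).differentiableAt
  have heq : verletStep N Δt H₁ H₂ = shearA c H₁ ∘ (shearB Δt H₂ ∘ shearA c H₁) := by
    funext x
    simp [verletStep, shearA, shearB, Function.comp, hc]
  rw [heq]
  refine ⟨hdA.comp (hdB.comp hdA), fun x u v => ?_⟩
  rw [fderiv_comp x (hdA _) ((hdB.comp hdA) x), fderiv_comp x (hdB _) (hdA x)]
  simp only [ContinuousLinearMap.coe_comp', Function.comp_apply]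
  rw [shearA_form c hH₁, shearB_form Δt hH₂, shearA_form c hH₁]
end
end
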